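/- Let X be the Weighted Load Balancing allocation for n agents with identical additive cost function c, weights w_i summing to 1, and item costs at most 1. Then ∑_i max{c(X_i) − w_i·c(M), 0} ≤ n/4 if n is even, and ≤ (n²−1)/(4n) if n is odd. -/

import Mathlib

open Finset

/-- Abstract counting lemma: if the "load" functions satisfy the pairwise
overshoot+deficit ≤ 1 property, the total overshoot is at most k(n-k)/n. -/
lemma wlb_aux (n : ℕ) (hn : 0 < n) (C : ℝ) (L w : Fin n → ℝ)
    (hLsum : ∑ i, L i = C) (hwsum : ∑ i, w i = 1)
    (key : ∀ i j : Fin n, w i * C < L i → L j ≤ w j * C →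
      (L i - w i * C) + (w j * C - L j) ≤ 1) :
    (Even n → ∑ i, max (L i - w i * C) 0 ≤ (n : ℝ) / 4) ∧
    (Odd n → ∑ i, max (L i - w i * C) 0 ≤ ((n : ℝ) ^ 2 - 1) / (4 * n)) := by
  classical
  set P : Finset (Fin n) := Finset.univ.filter (fun i => w i * C < L i) with hP
  set Q : Finset (Fin n) := Finset.univ.filter (fun i => ¬ w i * C < L i) with hQ
  set S : ℝ := ∑ i ∈ P, (L i - w i * C) with hS
  have hsum0 : ∑ i, (L i - w i * C) = 0 := by
    rw [Finset.sum_sub_distrib, hLsum, ← Finset.sum_mul, hwsum, one_mul, sub_self]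
  have hPQ : ∑ i ∈ P, (L i - w i * C) + ∑ i ∈ Q, (L i - w i * C) = 0 := by
    rw [hP, hQ, Finset.sum_filter_add_sum_filter_not]
    exact hsum0
  have hneg : ∑ j ∈ Q, (w j * C - L j) = - ∑ j ∈ Q, (L j - w j * C) := by
    rw [← Finset.sum_neg_distrib]
    exact Finset.sum_congr rfl (fun j _ => by ring)
  have hSQ : ∑ j ∈ Q, (w j * C - L j) = S := by
    rw [hneg, hS]; linarith [hPQ]
  have hper : ∀ j ∈ Q, S + (P.card : ℝ) * (w j * C - L j) ≤ (P.card : ℝ) := by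
    intro j hj
    have hj' : L j ≤ w j * C := le_of_not_gt (Finset.mem_filter.mp hj).2
    have h1 : ∑ i ∈ P, ((L i - w i * C) + (w j * C - L j)) ≤ ∑ i ∈ P, (1 : ℝ) := by
      apply Finset.sum_le_sum
      intro i hi
      exact key i j (Finset.mem_filter.mp hi).2 hj'
    rw [Finset.sum_add_distrib, Finset.sum_const, Finset.sum_const, nsmul_eq_mul,
      nsmul_eq_mul, mul_one, ← hS] at h1
    exact h1
  have hQsum : (Q.card : ℝ) * S + (P.card : ℝ) * S ≤ (P.card : ℝ) * Q.card := by
    have h1 : ∑ j ∈ Q, (S + (P.card : ℝ) * (w j * C - L j)) ≤ ∑ j ∈ Q, (P.card : ℝ) :=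
      Finset.sum_le_sum hper
    rw [Finset.sum_add_distrib, Finset.sum_const, Finset.sum_const, ← Finset.mul_sum,
      hSQ, nsmul_eq_mul, nsmul_eq_mul] at h1
    linarith [h1, mul_comm ((Q.card : ℝ)) ((P.card : ℝ))]
  have hcard : P.card + Q.card = n := by
    rw [hP, hQ]
    rw [Finset.card_filter_add_card_filter_not]
    simp
  have hns : (n : ℝ) * S ≤ (P.card : ℝ) * ((n : ℝ) - P.card) := by
    have hc : (Q.card : ℝ) = (n : ℝ) - P.card := by
      have := hcard
      push_cast [← this]
      ring
    rw [hc] at hQsum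
    nlinarith [hQsum]
  have hmax : ∑ i, max (L i - w i * C) 0 = S := by
    rw [hS, ← Finset.sum_filter_add_sum_filter_not Finset.univ (fun i => w i * C < L i)
      (fun i => max (L i - w i * C) 0), ← hP, ← hQ]
    have h1 : ∑ i ∈ P, max (L i - w i * C) 0 = ∑ i ∈ P, (L i - w i * C) :=
      Finset.sum_congr rfl fun i hi =>
        max_eq_left (le_of_lt (sub_pos.mpr (Finset.mem_filter.mp hi).2))
    have h2 : ∑ i ∈ Q, max (L i - w i * C) 0 = 0 :=
      Finset.sum_eq_zero fun i hi =>
        max_eq_right (sub_nonpos.mpr (le_of_not_gt (Finset.mem_filter.mp hi).2))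
    rw [h1, h2, add_zero]
  have hn' : (0 : ℝ) < n := by exact_mod_cast hn
  constructor
  · intro _
    rw [hmax, le_div_iff₀ (by norm_num : (0:ℝ) < 4)]
    nlinarith [hns, sq_nonneg ((n : ℝ) - 2 * P.card), hn']
  · intro hodd
    have hne : (n : ℤ) - 2 * P.card ≠ 0 := by
      intro h
      have h' : n = 2 * P.card := by exact_mod_cast (by linarith : (n : ℤ) = 2 * P.card)
      exact (Nat.not_even_iff_odd.mpr hodd) ⟨P.card, by omega⟩
    have habs : (1 : ℤ) ≤ |(n : ℤ) - 2 * P.card| := Int.one_le_abs hne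
    have hsqZ : (1 : ℤ) ≤ ((n : ℤ) - 2 * P.card) ^ 2 := by
      nlinarith [habs, sq_abs ((n : ℤ) - 2 * P.card), abs_nonneg ((n : ℤ) - 2 * P.card)]
    have hsqR : (1 : ℝ) ≤ ((n : ℝ) - 2 * P.card) ^ 2 := by exact_mod_cast hsqZ
    rw [hmax, le_div_iff₀ (by positivity : (0:ℝ) < 4 * n)]
    nlinarith [hns, hsqR, hn']

/-- Total subsidy bound for the Weighted Load Balancing allocation: with
identical additive costs (each item costing at most 1) and weights summing to 1,
`∑ i, max (c(X_i) - w i · c(M)) 0 ≤ n/4` if `n` is even and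
`≤ (n² - 1)/(4n)` if `n` is odd. -/
theorem weightedLoadBalancing_subsidy_bound (n m : ℕ) (hn : 0 < n)
    (c : Fin m → ℝ) (w : Fin n → ℝ)
    (hc : ∀ e, 0 ≤ c e ∧ c e ≤ 1)
    (hsort : ∀ j k : Fin m, j ≤ k → c k ≤ c j)
    (hw : ∀ i, 0 ≤ w i) (hwsum : ∑ i, w i = 1)
    (a : Fin m → Fin n)
    (halg : ∀ (j : Fin m) (i : Fin n),
      w i * (∑ e, c e) - ∑ e ∈ Finset.univ.filter (fun e => e < j ∧ a e = i), c e ≤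
        w (a j) * (∑ e, c e) -
          ∑ e ∈ Finset.univ.filter (fun e => e < j ∧ a e = a j), c e) :
    (Even n →
      ∑ i : Fin n,
        max ((∑ e ∈ Finset.univ.filter (fun e => a e = i), c e) - w i * ∑ e', c e') 0
          ≤ (n : ℝ) / 4) ∧
    (Odd n →
      ∑ i : Fin n,
        max ((∑ e ∈ Finset.univ.filter (fun e => a e = i), c e) - w i * ∑ e', c e') 0
          ≤ ((n : ℝ) ^ 2 - 1) / (4 * n)) := by
  classical
  have hC0 : (0 : ℝ) ≤ ∑ e, c e := Finset.sum_nonneg fun e _ => (hc e).1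
  have hLsum : ∑ i, (∑ e ∈ Finset.univ.filter (fun e => a e = i), c e) = ∑ e, c e :=
    Finset.sum_fiberwise_of_maps_to (fun e _ => Finset.mem_univ (a e)) c
  have key : ∀ i j : Fin n,
      w i * (∑ e, c e) < (∑ e ∈ Finset.univ.filter (fun e => a e = i), c e) →
      (∑ e ∈ Finset.univ.filter (fun e => a e = j), c e) ≤ w j * (∑ e, c e) →
      ((∑ e ∈ Finset.univ.filter (fun e => a e = i), c e) - w i * (∑ e, c e)) +
        (w j * (∑ e, c e) - (∑ e ∈ Finset.univ.filter (fun e => a e = j), c e)) ≤ 1 := by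
    intro i j hi hj
    have hT : (Finset.univ.filter (fun e => a e = i)).Nonempty := by
      by_contra h
      rw [Finset.not_nonempty_iff_eq_empty] at h
      rw [h, Finset.sum_empty] at hi
      have : 0 ≤ w i * ∑ e, c e := mul_nonneg (hw i) hC0
      linarith
    set e₀ : Fin m := (Finset.univ.filter (fun e => a e = i)).max' hT with he₀
    have hmem : e₀ ∈ Finset.univ.filter (fun e => a e = i) := Finset.max'_mem _ hT
    have ha : a e₀ = i := (Finset.mem_filter.mp hmem).2
    have hset : Finset.univ.filter (fun e => e < e₀ ∧ a e = i)
        = (Finset.univ.filter (fun e => a e = i)).erase e₀ := by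
      ext e
      simp only [Finset.mem_filter, Finset.mem_erase, Finset.mem_univ, true_and]
      constructor
      · rintro ⟨h1, h2⟩; exact ⟨ne_of_lt h1, h2⟩
      · rintro ⟨h1, h2⟩
        refine ⟨lt_of_le_of_ne ?_ h1, h2⟩
        exact Finset.le_max' _ e (Finset.mem_filter.mpr ⟨Finset.mem_univ e, h2⟩)
    have hsub : ∑ e ∈ Finset.univ.filter (fun e => e < e₀ ∧ a e = i), c e
        = (∑ e ∈ Finset.univ.filter (fun e => a e = i), c e) - c e₀ := by
      rw [hset]
      have h := Finset.add_sum_erase _ c hmem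
      linarith
    have hal := halg e₀ j
    simp only [ha] at hal
    rw [hsub] at hal
    have hmono : ∑ e ∈ Finset.univ.filter (fun e => e < e₀ ∧ a e = j), c e
        ≤ ∑ e ∈ Finset.univ.filter (fun e => a e = j), c e := by
      apply Finset.sum_le_sum_of_subset_of_nonneg
      · intro e he
        simp only [Finset.mem_filter, Finset.mem_univ, true_and] at *
        exact he.2
      · intro e _ _; exact (hc e).1
    have hce : c e₀ ≤ 1 := (hc e₀).2
    linarith
  exact wlb_aux n hn (∑ e, c e) (fun i => ∑ e ∈ Finset.univ.filter (fun e => a e = i), c e)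
    w hLsum hwsum key
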